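/- For λ > 0, μ > 0, d ≥ 0, y ∈ ℝ and v₀ ∈ ℝ, every minimizer of v ↦ λ·1_{v≠0} + (μ/2)(v − y)² + (d/2)(v − v₀)² equals the hard threshold T_{√(2λ/(μ+d))}((μy + d v₀)/(μ+d)) (with either value allowed at the threshold boundary). -/

import Mathlib

/-- Every minimizer of `v ↦ λ·1_{v≠0} + (μ/2)(v−y)² + (d/2)(v−v₀)²` is the
hard threshold of `(μy + d v₀)/(μ+d)` at level `√(2λ/(μ+d))`. -/
theorem stmt_2 (lam mu d y v0 vstar : ℝ) (hlam : 0 < lam) (hmu : 0 < mu) (hd : 0 ≤ d)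
    (hmin : ∀ v : ℝ,
      lam * (if vstar ≠ 0 then 1 else 0) + mu / 2 * (vstar - y) ^ 2 + d / 2 * (vstar - v0) ^ 2 ≤
        lam * (if v ≠ 0 then 1 else 0) + mu / 2 * (v - y) ^ 2 + d / 2 * (v - v0) ^ 2) :
    (|((mu * y + d * v0) / (mu + d))| < Real.sqrt (2 * lam / (mu + d)) → vstar = 0) ∧
    (Real.sqrt (2 * lam / (mu + d)) < |((mu * y + d * v0) / (mu + d))| →
      vstar = (mu * y + d * v0) / (mu + d)) ∧
    (|((mu * y + d * v0) / (mu + d))| = Real.sqrt (2 * lam / (mu + d)) →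
      vstar = 0 ∨ vstar = (mu * y + d * v0) / (mu + d)) := by
  have hs0 : (0:ℝ) < mu + d := by linarith
  set b : ℝ := (mu * y + d * v0) / (mu + d) with hbdef
  set t : ℝ := Real.sqrt (2 * lam / (mu + d)) with htdef
  have hbs : b * (mu + d) = mu * y + d * v0 := by
    rw [hbdef]; exact div_mul_cancel₀ _ hs0.ne'
  have expand : ∀ x : ℝ, mu / 2 * (x - y) ^ 2 + d / 2 * (x - v0) ^ 2 =
      (mu + d) / 2 * (x - b) ^ 2 + ((mu * y ^ 2 + d * v0 ^ 2) / 2 - (mu + d) / 2 * b ^ 2) := by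
    intro x
    linear_combination x * hbs
  have key : ∀ v : ℝ,
      lam * (if vstar ≠ 0 then 1 else 0) + (mu + d) / 2 * (vstar - b) ^ 2 ≤
        lam * (if v ≠ 0 then 1 else 0) + (mu + d) / 2 * (v - b) ^ 2 := by
    intro v
    have h := hmin v
    have e1 := expand vstar
    have e2 := expand v
    linarith
  have ht2 : t ^ 2 = 2 * lam / (mu + d) := by
    rw [htdef, Real.sq_sqrt (by positivity)]
  have ht0 : 0 < t := by
    rw [htdef]; exact Real.sqrt_pos.mpr (by positivity)
  have habs : |b| ^ 2 = b ^ 2 := sq_abs b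
  refine ⟨?_, ?_, ?_⟩
  · -- |b| < t → vstar = 0
    intro hlt
    by_contra hne
    have k := key 0
    simp only [hne, if_pos, ne_eq, not_true_eq_false, if_neg, not_false_eq_true] at k
    -- k : lam * 1 + (mu+d)/2 * (vstar - b)^2 ≤ lam * 0 + (mu+d)/2 * (0 - b)^2
    have hb2 : b ^ 2 < t ^ 2 := by
      nlinarith [abs_nonneg b]
    rw [ht2] at hb2
    have : b ^ 2 * (mu + d) < 2 * lam := by
      rw [lt_div_iff₀ hs0] at hb2; linarith
    nlinarith [sq_nonneg (vstar - b)]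
  · -- t < |b| → vstar = b
    intro hgt
    by_cases hv : vstar = 0
    · exfalso
      have k := key b
      simp only [hv, ne_eq, not_true_eq_false, if_neg, not_false_eq_true] at k
      have hind : (if b ≠ 0 then (1:ℝ) else 0) ≤ 1 := by split_ifs <;> norm_num
      have hb2 : t ^ 2 < b ^ 2 := by
        nlinarith [abs_nonneg b, ht0.le]
      rw [ht2] at hb2
      have : 2 * lam < b ^ 2 * (mu + d) := by
        rw [div_lt_iff₀ hs0] at hb2; linarith
      nlinarith
    · have k := key b
      simp only [hv, if_pos, ne_eq, not_false_eq_true] at k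
      have hind : (if b ≠ 0 then (1:ℝ) else 0) ≤ 1 := by split_ifs <;> norm_num
      have : (vstar - b) ^ 2 ≤ 0 := by nlinarith
      have := sq_nonneg (vstar - b)
      have h0 : (vstar - b) ^ 2 = 0 := le_antisymm ‹_› ‹_›
      have := pow_eq_zero_iff (n := 2) (by norm_num) |>.mp h0
      linarith [this]
  · -- |b| = t
    intro heq
    by_cases hv : vstar = 0
    · exact Or.inl hv
    · right
      have hb0 : b ≠ 0 := by
        intro h; rw [h] at heq; simp at heq; linarith [ht0, heq.symm ▸ ht0]
      have k := key b
      simp only [hv, hb0, ne_eq, not_false_eq_true, if_pos] at k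
      have : (vstar - b) ^ 2 ≤ 0 := by nlinarith
      have h0 : (vstar - b) ^ 2 = 0 := le_antisymm this (sq_nonneg _)
      have := pow_eq_zero_iff (n := 2) (by norm_num) |>.mp h0
      linarith [this]
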